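/- Let 𝒳 = span{X_1, …, X_k} ⊂ 𝔽^{n×n} (𝔽 = ℝ or ℂ) be a k-dimensional subspace and let X_* ∈ 𝒳 be a spectral approximation of Y ∈ 𝔽^{n×n} \ 𝒳. Define A_i = (Y − X_*)ᴴ X_i for i = 1, …, k, A_Y = (Y − X_*)ᴴ Y, and ϱ = ‖Y − X_*‖₂². Then equality max_{‖v‖₂=1} min_{X∈𝒳} ‖(Y − X)v‖₂ = min_{X∈𝒳} ‖Y − X‖₂ holds if and only if ϱ·e_1 belongs to 𝓕(A_Y, A_1, …, A_k), where e_1 is the first standard basis vector of 𝔽^{k+1}. -/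

import Mathlib

open Matrix

variable {𝕜 : Type*} [RCLike 𝕜]

/-- The spectral norm (matrix 2-norm): the supremum of `‖A v‖₂` over unit Euclidean
norm vectors `v`. -/
noncomputable def specNorm {m : Type*} [Fintype m] [DecidableEq m]
    (A : Matrix m m 𝕜) : ℝ :=
  sSup {r : ℝ | ∃ v : EuclideanSpace 𝕜 m, ‖v‖ = 1 ∧ r = ‖Matrix.toEuclideanLin A v‖}

/-- `Xs` is a spectral (best) approximation of `Y` from the subspace `𝒳`. -/
def IsSpectralApprox {m : Type*} [Fintype m] [DecidableEq m]
    (𝒳 : Submodule 𝕜 (Matrix m m 𝕜)) (Y Xs : Matrix m m 𝕜) : Prop :=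
  Xs ∈ 𝒳 ∧ ∀ X ∈ 𝒳, specNorm (Y - Xs) ≤ specNorm (Y - X)

/-- The span of the maximal right singular vectors of `M`. -/
noncomputable def maxRSV {m : Type*} [Fintype m] [DecidableEq m]
    (M : Matrix m m 𝕜) : Submodule 𝕜 (EuclideanSpace 𝕜 m) :=
  Submodule.span 𝕜 {v : EuclideanSpace 𝕜 m | ‖v‖ = 1 ∧ ‖Matrix.toEuclideanLin M v‖ = specNorm M}

/-- The `k`-dimensional field of the `k` matrices `A 0, …, A (k-1)` restricted to
the subspace `S`. -/
def kField {m : Type*} [Fintype m] [DecidableEq m] {k : ℕ}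
    (A : Fin k → Matrix m m 𝕜) (S : Submodule 𝕜 (EuclideanSpace 𝕜 m)) : Set (Fin k → 𝕜) :=
  {w | ∃ v : EuclideanSpace 𝕜 m, v ∈ S ∧ ‖v‖ = 1 ∧
     w = fun i => (inner 𝕜 v (Matrix.toEuclideanLin (A i) v) : 𝕜)}

/-- min-max value -/
noncomputable def minMaxVal {m : Type*} [Fintype m] [DecidableEq m]
    (𝒳 : Submodule 𝕜 (Matrix m m 𝕜)) (Y : Matrix m m 𝕜) : ℝ :=
  sInf {r : ℝ | ∃ X ∈ 𝒳, r = specNorm (Y - X)}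

/-- max-min value -/
noncomputable def maxMinVal {m : Type*} [Fintype m] [DecidableEq m]
    (𝒳 : Submodule 𝕜 (Matrix m m 𝕜)) (Y : Matrix m m 𝕜) : ℝ :=
  sSup {r : ℝ | ∃ v : EuclideanSpace 𝕜 m, ‖v‖ = 1 ∧
    r = sInf {s : ℝ | ∃ X ∈ 𝒳, s = ‖Matrix.toEuclideanLin (Y - X) v‖}}

/-- dual norm of a linear functional w.r.t. the spectral norm -/
noncomputable def dualNorm {m : Type*} [Fintype m] [DecidableEq m]
    (f : Matrix m m 𝕜 →ₗ[𝕜] 𝕜) : ℝ :=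
  sSup {r : ℝ | ∃ A : Matrix m m 𝕜, specNorm A = 1 ∧ r = ‖f A‖}

/-- the rank one matrix `u vᴴ` -/
def outer {m : Type*} (u v : EuclideanSpace 𝕜 m) : Matrix m m 𝕜 :=
  Matrix.of fun i j => u i * star (v j)

/-- nuclear (Schatten 1) norm: the sum of the singular values -/
noncomputable def nuclearNorm {m : Type*} [Fintype m] [DecidableEq m]
    (F : Matrix m m 𝕜) : ℝ :=
  ∑ i, Real.sqrt ((Matrix.isHermitian_conjTranspose_mul_self F).eigenvalues i)

section Aux

variable {m : Type*} [Fintype m] [DecidableEq m]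

private lemma TEmul (A B : Matrix m m 𝕜) (v : EuclideanSpace 𝕜 m) :
    Matrix.toEuclideanLin (A * B) v = Matrix.toEuclideanLin A (Matrix.toEuclideanLin B v) := by
  simp [Matrix.toEuclideanLin_apply, Matrix.mulVec_mulVec]

private lemma innerT (A B : Matrix m m 𝕜) (v : EuclideanSpace 𝕜 m) :
    (inner 𝕜 v (Matrix.toEuclideanLin (Aᴴ * B) v) : 𝕜)
      = inner 𝕜 (Matrix.toEuclideanLin A v) (Matrix.toEuclideanLin B v) := by
  rw [TEmul, Matrix.toEuclideanLin_conjTranspose_eq_adjoint, LinearMap.adjoint_inner_right]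

private lemma specNorm_bddAbove (A : Matrix m m 𝕜) :
    BddAbove {r : ℝ | ∃ v : EuclideanSpace 𝕜 m, ‖v‖ = 1 ∧ r = ‖Matrix.toEuclideanLin A v‖} := by
  refine ⟨‖LinearMap.toContinuousLinearMap (Matrix.toEuclideanLin A)‖, ?_⟩
  rintro r ⟨v, hv, rfl⟩
  calc ‖Matrix.toEuclideanLin A v‖
      = ‖LinearMap.toContinuousLinearMap (Matrix.toEuclideanLin A) v‖ := rfl
    _ ≤ ‖LinearMap.toContinuousLinearMap (Matrix.toEuclideanLin A)‖ * ‖v‖ :=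
        ContinuousLinearMap.le_opNorm _ _
    _ = _ := by rw [hv, mul_one]

private lemma specNorm_nonneg (A : Matrix m m 𝕜) : 0 ≤ specNorm A :=
  Real.sSup_nonneg (by rintro r ⟨v, hv, rfl⟩; positivity)

private lemma le_specNorm (A : Matrix m m 𝕜) {v : EuclideanSpace 𝕜 m} (hv : ‖v‖ = 1) :
    ‖Matrix.toEuclideanLin A v‖ ≤ specNorm A :=
  le_csSup (specNorm_bddAbove A) ⟨v, hv, rfl⟩

private lemma inner_eq_zero_of_min {E : Type*} [NormedAddCommGroup E] [InnerProductSpace 𝕜 E]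
    (a b : E) (h : ∀ c : 𝕜, ‖a‖ ≤ ‖a - c • b‖) : (inner 𝕜 a b : 𝕜) = 0 := by
  by_cases hb : b = 0
  · simp [hb]
  set ip : 𝕜 := inner 𝕜 a b with hip
  by_contra hne
  have hbpos : (0:ℝ) < ‖b‖ := norm_pos_iff.mpr hb
  have hipos : (0:ℝ) < ‖ip‖ := norm_pos_iff.mpr hne
  set c : 𝕜 := ((‖b‖^2)⁻¹ : ℝ) • (starRingEnd 𝕜 ip) with hc
  have h1 : ‖a‖^2 ≤ ‖a - c • b‖^2 := by
    have := h c; nlinarith [norm_nonneg a, norm_nonneg (a - c • b)]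
  rw [@norm_sub_sq 𝕜] at h1
  have hin : (inner 𝕜 a (c • b) : 𝕜) = ((‖b‖^2)⁻¹ : ℝ) • ((‖ip‖^2 : ℝ) : 𝕜) := by
    rw [inner_smul_right, hc, smul_mul_assoc, RCLike.conj_mul]; push_cast; ring
  have hre : RCLike.re (inner 𝕜 a (c • b) : 𝕜) = (‖b‖^2)⁻¹ * ‖ip‖^2 := by
    rw [hin, RCLike.smul_re, RCLike.ofReal_re]
  have hcn : ‖c‖ = (‖b‖^2)⁻¹ * ‖ip‖ := by
    rw [hc, norm_smul, RCLike.norm_conj, Real.norm_eq_abs, abs_of_nonneg (by positivity)]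
  rw [hre, norm_smul, hcn] at h1
  have hb2 : (0:ℝ) < ‖b‖^2 := by positivity
  have expand : ((‖b‖^2)⁻¹ * ‖ip‖ * ‖b‖)^2 = (‖b‖^2)⁻¹ * ‖ip‖^2 := by
    field_simp
  rw [expand] at h1
  have hX : (0:ℝ) < (‖b‖^2)⁻¹ * ‖ip‖^2 := by positivity
  linarith

/-- the inner min function -/
private noncomputable def fv (𝒳 : Submodule 𝕜 (Matrix m m 𝕜)) (Y : Matrix m m 𝕜)
    (v : EuclideanSpace 𝕜 m) : ℝ :=
  sInf {s : ℝ | ∃ X ∈ 𝒳, s = ‖Matrix.toEuclideanLin (Y - X) v‖}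

private lemma maxMinVal_eq_sSup (𝒳 : Submodule 𝕜 (Matrix m m 𝕜)) (Y : Matrix m m 𝕜) :
    maxMinVal 𝒳 Y = sSup {r : ℝ | ∃ v : EuclideanSpace 𝕜 m, ‖v‖ = 1 ∧ r = fv 𝒳 Y v} := rfl

private lemma fv_le {𝒳 : Submodule 𝕜 (Matrix m m 𝕜)} {Y X' : Matrix m m 𝕜}
    (hX' : X' ∈ 𝒳) (v : EuclideanSpace 𝕜 m) :
    fv 𝒳 Y v ≤ ‖Matrix.toEuclideanLin (Y - X') v‖ :=
  csInf_le ⟨0, by rintro s ⟨X, _, rfl⟩; positivity⟩ ⟨X', hX', rfl⟩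

private lemma le_fv {𝒳 : Submodule 𝕜 (Matrix m m 𝕜)} {Y Xs : Matrix m m 𝕜}
    (hXs : Xs ∈ 𝒳) {v : EuclideanSpace 𝕜 m} {c : ℝ}
    (h : ∀ X' ∈ 𝒳, c ≤ ‖Matrix.toEuclideanLin (Y - X') v‖) :
    c ≤ fv 𝒳 Y v :=
  le_csInf ⟨_, Xs, hXs, rfl⟩ (by rintro s ⟨X, hX, rfl⟩; exact h X hX)

end Aux

set_option maxHeartbeats 1000000 in
theorem stmt13 {n k : ℕ} (X : Fin k → Matrix (Fin n) (Fin n) 𝕜)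
    (hdim : Module.finrank 𝕜 (Submodule.span 𝕜 (Set.range X)) = k)
    (Y Xs : Matrix (Fin n) (Fin n) 𝕜)
    (hY : Y ∉ Submodule.span 𝕜 (Set.range X))
    (happrox : IsSpectralApprox (Submodule.span 𝕜 (Set.range X)) Y Xs) :
    maxMinVal (Submodule.span 𝕜 (Set.range X)) Y
        = minMaxVal (Submodule.span 𝕜 (Set.range X)) Y ↔
      (fun i : Fin (k + 1) => if i = 0 then ((specNorm (Y - Xs) ^ 2 : ℝ) : 𝕜) else 0) ∈
        kField (Fin.cons ((Y - Xs)ᴴ * Y) (fun i => (Y - Xs)ᴴ * X i)) ⊤ := by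
  classical
  set 𝒳 := Submodule.span 𝕜 (Set.range X) with h𝒳
  set ρ := specNorm (Y - Xs) with hρ
  obtain ⟨hXs, hbest⟩ := happrox
  have hρ0 : (0:ℝ) ≤ ρ := specNorm_nonneg _
  -- a unit vector exists
  have hunit : ∃ u : EuclideanSpace 𝕜 (Fin n), ‖u‖ = 1 := by
    rcases Nat.eq_zero_or_pos n with h0 | hpos
    · exfalso
      apply hY
      subst h0
      have : Y = 0 := Subsingleton.elim _ _
      rw [this]; exact Submodule.zero_mem _
    · exact ⟨EuclideanSpace.single ⟨0, hpos⟩ 1, by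
        simp [EuclideanSpace.norm_single]⟩
  obtain ⟨u0, hu0⟩ := hunit
  -- minMaxVal = ρ
  have hmm : minMaxVal 𝒳 Y = ρ := by
    apply le_antisymm
    · exact csInf_le ⟨0, by rintro r ⟨X', _, rfl⟩; exact specNorm_nonneg _⟩ ⟨Xs, hXs, rfl⟩
    · exact le_csInf ⟨_, Xs, hXs, rfl⟩ (by rintro r ⟨X', hX', rfl⟩; exact hbest X' hX')
  -- fv is at most ρ
  have hfvle : ∀ v : EuclideanSpace 𝕜 (Fin n), ‖v‖ = 1 → fv 𝒳 Y v ≤ ρ := fun v hv =>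
    (fv_le hXs v).trans (le_specNorm _ hv)
  have hbdd : BddAbove {r : ℝ | ∃ v : EuclideanSpace 𝕜 (Fin n), ‖v‖ = 1 ∧ r = fv 𝒳 Y v} :=
    ⟨ρ, by rintro r ⟨v, hv, rfl⟩; exact hfvle v hv⟩
  have hsle : maxMinVal 𝒳 Y ≤ ρ := by
    rw [maxMinVal_eq_sSup]
    exact Real.sSup_le (by rintro r ⟨v, hv, rfl⟩; exact hfvle v hv) hρ0
  -- orthogonality ⇒ value of coordinates
  constructor
  · -- equality ⇒ membership
    intro heq
    have hsup : sSup {r : ℝ | ∃ v : EuclideanSpace 𝕜 (Fin n), ‖v‖ = 1 ∧ r = fv 𝒳 Y v} = ρ := by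
      rw [← maxMinVal_eq_sSup, heq, hmm]
    -- extract an almost-maximizing sequence
    have hseq : ∀ j : ℕ, ∃ v : EuclideanSpace 𝕜 (Fin n),
        ‖v‖ = 1 ∧ ρ - 1/((j:ℝ)+1) < fv 𝒳 Y v := by
      intro j
      have hpos : (0:ℝ) < 1/((j:ℝ)+1) := by positivity
      have hlt : ρ - 1/((j:ℝ)+1) < sSup {r : ℝ | ∃ v : EuclideanSpace 𝕜 (Fin n),
          ‖v‖ = 1 ∧ r = fv 𝒳 Y v} := by rw [hsup]; linarith
      have hne : Set.Nonempty {r : ℝ | ∃ v : EuclideanSpace 𝕜 (Fin n),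
          ‖v‖ = 1 ∧ r = fv 𝒳 Y v} := ⟨fv 𝒳 Y u0, u0, hu0, rfl⟩
      obtain ⟨r, ⟨v, hv, rfl⟩, hr⟩ := exists_lt_of_lt_csSup hne hlt
      exact ⟨v, hv, hr⟩
    choose v hv1 hvf using hseq
    have hsph : ∀ j, v j ∈ Metric.sphere (0 : EuclideanSpace 𝕜 (Fin n)) 1 := fun j =>
      mem_sphere_zero_iff_norm.mpr (hv1 j)
    obtain ⟨w, hwmem, φ, hφ, hconv⟩ :=
      (isCompact_sphere (0 : EuclideanSpace 𝕜 (Fin n)) 1).tendsto_subseq hsph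
    have hw1 : ‖w‖ = 1 := mem_sphere_zero_iff_norm.mp hwmem
    have hkey : ∀ X' ∈ 𝒳, ρ ≤ ‖Matrix.toEuclideanLin (Y - X') w‖ := by
      intro X' hX'
      have hcont : Continuous fun z : EuclideanSpace 𝕜 (Fin n) => ‖Matrix.toEuclideanLin (Y - X') z‖ :=
        (LinearMap.continuous_of_finiteDimensional (Matrix.toEuclideanLin (Y - X'))).norm
      have hlim : Filter.Tendsto (fun j => ‖Matrix.toEuclideanLin (Y - X') (v (φ j))‖) Filter.atTop
          (nhds ‖Matrix.toEuclideanLin (Y - X') w‖) := (hcont.tendsto w).comp hconv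
      have hρlim : Filter.Tendsto (fun j : ℕ => ρ - 1/((j:ℝ)+1)) Filter.atTop (nhds ρ) := by
        have h0 : Filter.Tendsto (fun j : ℕ => 1/((j:ℝ)+1)) Filter.atTop (nhds 0) :=
          tendsto_one_div_add_atTop_nhds_zero_nat
        simpa using Filter.Tendsto.sub (tendsto_const_nhds (x := ρ)) h0
      refine le_of_tendsto_of_tendsto' hρlim hlim fun j => ?_
      have h1 : ρ - 1/((φ j : ℝ)+1) < fv 𝒳 Y (v (φ j)) := hvf (φ j)
      have h2 : fv 𝒳 Y (v (φ j)) ≤ ‖Matrix.toEuclideanLin (Y - X') (v (φ j))‖ := fv_le hX' _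
      have h3 : 1/((φ j : ℝ)+1) ≤ 1/((j:ℝ)+1) := by
        apply one_div_le_one_div_of_le (by positivity)
        have hj : j ≤ φ j := hφ.le_apply
        have : (j:ℝ) ≤ (φ j : ℝ) := by exact_mod_cast hj
        linarith
      linarith
    set a := Matrix.toEuclideanLin (Y - Xs) w with ha
    have hna : ‖a‖ = ρ := le_antisymm (le_specNorm _ hw1) (hkey Xs hXs)
    have horth : ∀ X' ∈ 𝒳, (inner 𝕜 a (Matrix.toEuclideanLin X' w) : 𝕜) = 0 := by
      intro X' hX'
      apply inner_eq_zero_of_min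
      intro c
      have hmem : Xs + c • X' ∈ 𝒳 := Submodule.add_mem _ hXs (Submodule.smul_mem _ _ hX')
      have hrw : Matrix.toEuclideanLin (Y - (Xs + c • X')) w = a - c • Matrix.toEuclideanLin X' w := by
        rw [ha, sub_add_eq_sub_sub]
        simp [map_sub, _root_.map_smul]
      have := hkey _ hmem
      rw [hrw] at this
      rw [hna]; exact this
    refine ⟨w, Submodule.mem_top, hw1, ?_⟩
    funext i
    refine Fin.cases ?_ ?_ i
    · rw [if_pos rfl, Fin.cons_zero, innerT]
      have hYw : Matrix.toEuclideanLin Y w = a + Matrix.toEuclideanLin Xs w := by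
        rw [ha]; simp [map_sub]
      rw [hYw, inner_add_right, horth Xs hXs, add_zero, inner_self_eq_norm_sq_to_K, hna]
      push_cast
      ring
    · intro i
      rw [if_neg (Fin.succ_ne_zero i), Fin.cons_succ, innerT]
      exact (horth (X i) (Submodule.subset_span ⟨i, rfl⟩)).symm
  · -- membership ⇒ equality
    rintro ⟨w, -, hw1, hweq⟩
    set a := Matrix.toEuclideanLin (Y - Xs) w with ha
    have h0 := congrFun hweq 0
    rw [if_pos rfl, Fin.cons_zero, innerT] at h0
    have hi : ∀ i : Fin k, (inner 𝕜 a (Matrix.toEuclideanLin (X i) w) : 𝕜) = 0 := by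
      intro i
      have := congrFun hweq i.succ
      rw [if_neg (Fin.succ_ne_zero i), Fin.cons_succ, innerT] at this
      exact this.symm
    have horth : ∀ X' ∈ 𝒳, (inner 𝕜 a (Matrix.toEuclideanLin X' w) : 𝕜) = 0 := by
      intro X' hX'
      induction hX' using Submodule.span_induction with
      | mem x hx => obtain ⟨i, rfl⟩ := hx; exact hi i
      | zero => simp
      | add x y _ _ hx hy => rw [map_add, LinearMap.add_apply, inner_add_right, hx, hy, add_zero]
      | smul c x _ hx => rw [_root_.map_smul, LinearMap.smul_apply, inner_smul_right, hx, mul_zero]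
    have hna : ‖a‖ = ρ := by
      have hYw : Matrix.toEuclideanLin Y w = a + Matrix.toEuclideanLin Xs w := by
        rw [ha]; simp [map_sub]
      rw [hYw, inner_add_right, horth Xs hXs, add_zero, inner_self_eq_norm_sq_to_K] at h0
      have h2 : ‖a‖^2 = ρ^2 := by
        have h0' : ((ρ^2 : ℝ) : 𝕜) = ((‖a‖ : 𝕜))^2 := h0
        exact_mod_cast h0'.symm
      calc ‖a‖ = Real.sqrt (‖a‖^2) := (Real.sqrt_sq (norm_nonneg a)).symm
        _ = Real.sqrt (ρ^2) := by rw [h2]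
        _ = ρ := Real.sqrt_sq hρ0
    have hkey : ∀ X' ∈ 𝒳, ρ ≤ ‖Matrix.toEuclideanLin (Y - X') w‖ := by
      intro X' hX'
      have hrw : Matrix.toEuclideanLin (Y - X') w = a + Matrix.toEuclideanLin (Xs - X') w := by
        rw [ha]; simp only [map_sub, LinearMap.sub_apply]; abel
      have hperp : (inner 𝕜 a (Matrix.toEuclideanLin (Xs - X') w) : 𝕜) = 0 := by
        rw [map_sub, LinearMap.sub_apply, inner_sub_right, horth Xs hXs, horth X' hX',
          sub_zero]
      have hsq := norm_add_sq_eq_norm_sq_add_norm_sq_of_inner_eq_zero a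
        (Matrix.toEuclideanLin (Xs - X') w) hperp
      rw [hrw, ← hna]
      set bb := Matrix.toEuclideanLin (Xs - X') w
      calc ‖a‖ = Real.sqrt (‖a‖ * ‖a‖) := (Real.sqrt_mul_self (norm_nonneg a)).symm
        _ ≤ Real.sqrt (‖a + bb‖ * ‖a + bb‖) := by
            apply Real.sqrt_le_sqrt
            nlinarith [mul_self_nonneg ‖bb‖]
        _ = ‖a + bb‖ := Real.sqrt_mul_self (norm_nonneg _)
    have hfveq : fv 𝒳 Y w = ρ := le_antisymm (hfvle w hw1) (le_fv hXs hkey)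
    have hge : ρ ≤ maxMinVal 𝒳 Y := by
      rw [maxMinVal_eq_sSup]
      exact le_csSup hbdd ⟨w, hw1, hfveq.symm⟩
    rw [hmm]
    exact le_antisymm hsle hge
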